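/- Let V = (ZMod 2)^n and let A₁, A₂, A₃ ⊆ V with |A_i| = α_i·2^n for i = 1, 2, 3. If 0 < ε < 1/2 and A₁ and A₂ are ε-uniform in V, then the number of triples (a₁, a₂, a₃) ∈ A₁ × A₂ × A₃ with a₁ + a₂ + a₃ = 0 is at least (α₁·α₂·α₃ − ε)·2^(2n). -/

import Mathlib

/-- `A` is `ε`-uniform in `V = (ZMod 2)^n`: for every codimension-1 subspace `H` of `V`,
`| |A ∩ H| - |A \ H| | ≤ ε·2^n`. -/
def IsUniform {n : ℕ} (ε : ℝ) (A : Set (Fin n → ZMod 2)) : Prop :=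
  ∀ H : Submodule (ZMod 2) (Fin n → ZMod 2),
    Module.finrank (ZMod 2) H + 1 = n →
    |((A ∩ ↑H).ncard : ℝ) - ((A \ ↑H).ncard : ℝ)| ≤ ε * 2 ^ n



def chi (r x : Fin n → ZMod 2) : ℝ := if ∑ i, r i * x i = 0 then 1 else -1

lemma nu_mul (a b : ZMod 2) : (if a + b = 0 then (1:ℝ) else -1)
    = (if a = 0 then (1:ℝ) else -1) * (if b = 0 then (1:ℝ) else -1) := by
  have ha := (by decide : ∀ c : ZMod 2, c = 0 ∨ c = 1) a
  have hb := (by decide : ∀ c : ZMod 2, c = 0 ∨ c = 1) b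
  rcases ha with ha|ha <;> rcases hb with hb|hb <;> subst ha <;> subst hb <;> norm_num <;> decide

lemma chi_add_right (r x y : Fin n → ZMod 2) : chi r (x + y) = chi r x * chi r y := by
  unfold chi
  rw [show ∑ i, r i * (x + y) i = (∑ i, r i * x i) + ∑ i, r i * y i by
    rw [← Finset.sum_add_distrib]; exact Finset.sum_congr rfl fun i _ => by simp [mul_add]]
  exact nu_mul _ _

lemma chi_add_left (r s x : Fin n → ZMod 2) : chi (r + s) x = chi r x * chi s x := by
  unfold chi
  rw [show ∑ i, (r + s) i * x i = (∑ i, r i * x i) + ∑ i, s i * x i by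
    rw [← Finset.sum_add_distrib]; exact Finset.sum_congr rfl fun i _ => by simp [add_mul]]
  exact nu_mul _ _

lemma chi_single (i : Fin n) (x : Fin n → ZMod 2) :
    chi (Pi.single i 1) x = if x i = 0 then 1 else -1 := by
  have h : ∑ j, (Pi.single i 1 : Fin n → ZMod 2) j * x j = x i := by
    rw [Finset.sum_eq_single i]
    · simp
    · intro j _ hj; simp [Pi.single_apply, hj]
    · simp
  unfold chi; rw [h]

lemma chi_zero_right (r : Fin n → ZMod 2) : chi r 0 = 1 := by simp [chi]

lemma card_V : (Fintype.card (Fin n → ZMod 2)) = 2 ^ n := by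
  simp [Fintype.card_fun]

lemma sum_chi (y : Fin n → ZMod 2) : ∑ r, chi r y = if y = 0 then (2^n : ℝ) else 0 := by
  by_cases hy : y = 0
  · subst hy
    simp only [chi_zero_right, Finset.sum_const, Finset.card_univ, card_V, nsmul_eq_mul,
      mul_one, Nat.cast_pow, Nat.cast_ofNat, if_true, eq_self_iff_true]
  · rw [if_neg hy]
    obtain ⟨i, hi⟩ : ∃ i, y i ≠ 0 := by
      by_contra h; push_neg at h; exact hy (funext fun i => h i)
    have hyi : y i = 1 := by
      have := (by decide : ∀ c : ZMod 2, c = 0 ∨ c = 1) (y i); tauto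
    set c : Fin n → ZMod 2 := Pi.single i 1 with hc
    have key : ∑ r, chi (r + c) y = ∑ r, chi r y :=
      Fintype.sum_equiv (Equiv.addRight c)
        (fun r => chi (r + c) y) (fun r => chi r y) (fun r => rfl)
    have h2 : ∑ r, chi (r + c) y = - ∑ r, chi r y := by
      rw [← Finset.sum_neg_distrib]
      apply Finset.sum_congr rfl; intro r _
      rw [chi_add_left, chi_single, hyi]
      simp [(by decide : (1:ZMod 2) ≠ 0)]
    linarith

lemma chi_zero_left (x : Fin n → ZMod 2) : chi 0 x = 1 := by simp [chi]

lemma pi_add_eq_zero (a b : Fin n → ZMod 2) : a + b = 0 ↔ a = b := by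
  constructor
  · intro h; funext i
    exact (by decide : ∀ x y : ZMod 2, x + y = 0 → x = y) _ _ (congrFun h i)
  · rintro rfl; funext i
    exact (by decide : ∀ x : ZMod 2, x + x = 0) _

lemma parseval (B : Finset (Fin n → ZMod 2)) :
    ∑ r, (∑ a ∈ B, chi r a) ^ 2 = 2 ^ n * B.card := by
  have h1 : ∀ r : Fin n → ZMod 2, (∑ a ∈ B, chi r a) ^ 2 = ∑ a ∈ B, ∑ b ∈ B, chi r (a + b) := by
    intro r
    rw [sq, Finset.sum_mul_sum B B (fun a => chi r a) (fun b => chi r b)]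
    exact Finset.sum_congr rfl fun a _ => Finset.sum_congr rfl fun b _ =>
      (chi_add_right r a b).symm
  have h2 : ∀ a b : Fin n → ZMod 2,
      (∑ r : Fin n → ZMod 2, chi r (a + b)) = if a = b then (2:ℝ)^n else 0 := by
    intro a b; rw [sum_chi]
    by_cases h : a = b
    · rw [if_pos ((pi_add_eq_zero a b).mpr h), if_pos h]
    · rw [if_neg (fun hh => h ((pi_add_eq_zero a b).mp hh)), if_neg h]
  calc ∑ r, (∑ a ∈ B, chi r a) ^ 2
      = ∑ r : Fin n → ZMod 2, ∑ a ∈ B, ∑ b ∈ B, chi r (a + b) :=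
        Finset.sum_congr rfl fun r _ => h1 r
    _ = ∑ a ∈ B, ∑ r : Fin n → ZMod 2, ∑ b ∈ B, chi r (a + b) := Finset.sum_comm
    _ = ∑ a ∈ B, ∑ b ∈ B, ∑ r : Fin n → ZMod 2, chi r (a + b) :=
        Finset.sum_congr rfl fun a _ => Finset.sum_comm
    _ = ∑ a ∈ B, ∑ b ∈ B, if a = b then (2:ℝ)^n else 0 :=
        Finset.sum_congr rfl fun a _ => Finset.sum_congr rfl fun b _ => h2 a b
    _ = ∑ a ∈ B, (2:ℝ)^n := Finset.sum_congr rfl fun a ha => by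
        rw [Finset.sum_ite_eq B a (fun _ => (2:ℝ)^n), if_pos ha]
    _ = 2 ^ n * B.card := by rw [Finset.sum_const, nsmul_eq_mul, mul_comm]

lemma uniform_bound {ε : ℝ} {A : Set (Fin n → ZMod 2)} (hu : IsUniform ε A)
    (r : Fin n → ZMod 2) (hr : r ≠ 0) :
    |∑ a ∈ (Set.toFinite A).toFinset, chi r a| ≤ ε * 2 ^ n := by
  classical
  set B := (Set.toFinite A).toFinset with hB
  let φ : (Fin n → ZMod 2) →ₗ[ZMod 2] ZMod 2 :=
    { toFun := fun x => ∑ i, r i * x i,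
      map_add' := fun x y => by
        simp only [Pi.add_apply, mul_add]
        rw [Finset.sum_add_distrib]
      map_smul' := fun c x => by
        simp only [Pi.smul_apply, smul_eq_mul, RingHom.id_apply]
        rw [Finset.mul_sum]
        exact Finset.sum_congr rfl fun i _ => by ring }
  obtain ⟨i, hi⟩ : ∃ i, r i ≠ 0 := by
    by_contra h; push_neg at h; exact hr (funext fun i => h i)
  have hri : r i = 1 := by
    have := (by decide : ∀ c : ZMod 2, c = 0 ∨ c = 1) (r i); tauto
  have hone : φ (Pi.single i 1) = 1 := by
    show ∑ j, r j * (Pi.single i 1 : Fin n → ZMod 2) j = 1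
    rw [Finset.sum_eq_single i]
    · simp [hri]
    · intro j _ hj; simp [Pi.single_apply, hj]
    · simp
  have hsurj : Function.Surjective φ := by
    intro c
    refine ⟨c • Pi.single i 1, ?_⟩
    rw [map_smul, hone, smul_eq_mul, mul_one]
  have hrank : Module.finrank (ZMod 2) (LinearMap.ker φ) + 1 = n := by
    have h1 := LinearMap.finrank_range_add_finrank_ker φ
    rw [LinearMap.range_eq_top.mpr hsurj, finrank_top, Module.finrank_self] at h1
    have h2 : Module.finrank (ZMod 2) (Fin n → ZMod 2) = n := by
      rw [Module.finrank_pi]; simp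
    omega
  have hH := hu (LinearMap.ker φ) hrank
  have hmem : ∀ a, (a ∈ LinearMap.ker φ) ↔ (∑ j, r j * a j = 0) := fun a => LinearMap.mem_ker
  have hsplit : ∑ a ∈ B, chi r a
      = ((A ∩ ↑(LinearMap.ker φ)).ncard : ℝ) - ((A \ ↑(LinearMap.ker φ)).ncard : ℝ) := by
    have e1 : A ∩ ↑(LinearMap.ker φ) = ↑(B.filter (fun a => a ∈ LinearMap.ker φ)) := by
      ext a; simp [hB, Set.Finite.mem_toFinset]
    have e2 : A \ ↑(LinearMap.ker φ) = ↑(B.filter (fun a => a ∉ LinearMap.ker φ)) := by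
      ext a; simp [hB, Set.Finite.mem_toFinset]
    rw [e1, e2, Set.ncard_coe_finset, Set.ncard_coe_finset]
    have : ∀ a ∈ B, chi r a = if a ∈ LinearMap.ker φ then (1:ℝ) else -1 := by
      intro a _
      unfold chi
      by_cases h : a ∈ LinearMap.ker φ
      · rw [if_pos ((hmem a).mp h), if_pos h]
      · rw [if_neg (fun hh => h ((hmem a).mpr hh)), if_neg h]
    rw [Finset.sum_congr rfl this, Finset.sum_ite, Finset.sum_const, Finset.sum_const]
    simp [nsmul_eq_mul]
    ring
  rw [hsplit]
  exact hH

theorem stmt_15 (n : ℕ) (A₁ A₂ A₃ : Set (Fin n → ZMod 2)) (α₁ α₂ α₃ ε : ℝ)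
    (h₁ : (A₁.ncard : ℝ) = α₁ * 2 ^ n)
    (h₂ : (A₂.ncard : ℝ) = α₂ * 2 ^ n)
    (h₃ : (A₃.ncard : ℝ) = α₃ * 2 ^ n)
    (hε : 0 < ε) (hε2 : ε < 1 / 2)
    (hu₁ : IsUniform ε A₁) (hu₂ : IsUniform ε A₂) :
    (α₁ * α₂ * α₃ - ε) * 2 ^ (2 * n) ≤
      (({p : (Fin n → ZMod 2) × (Fin n → ZMod 2) × (Fin n → ZMod 2) |
          p.1 ∈ A₁ ∧ p.2.1 ∈ A₂ ∧ p.2.2 ∈ A₃ ∧ p.1 + p.2.1 + p.2.2 = 0}).ncard : ℝ) := by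
  classical
  set B₁ := (Set.toFinite A₁).toFinset with hB₁d
  set B₂ := (Set.toFinite A₂).toFinset with hB₂d
  set B₃ := (Set.toFinite A₃).toFinset with hB₃d
  have hc₁ : (B₁.card : ℝ) = α₁ * 2 ^ n := by
    rw [← Set.ncard_eq_toFinset_card A₁ (Set.toFinite A₁)]; exact h₁
  have hc₂ : (B₂.card : ℝ) = α₂ * 2 ^ n := by
    rw [← Set.ncard_eq_toFinset_card A₂ (Set.toFinite A₂)]; exact h₂
  have hc₃ : (B₃.card : ℝ) = α₃ * 2 ^ n := by
    rw [← Set.ncard_eq_toFinset_card A₃ (Set.toFinite A₃)]; exact h₃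
  set F := (B₁ ×ˢ B₂ ×ˢ B₃).filter (fun p => p.1 + p.2.1 + p.2.2 = 0) with hFd
  have hset : {p : (Fin n → ZMod 2) × (Fin n → ZMod 2) × (Fin n → ZMod 2) |
      p.1 ∈ A₁ ∧ p.2.1 ∈ A₂ ∧ p.2.2 ∈ A₃ ∧ p.1 + p.2.1 + p.2.2 = 0} = ↑F := by
    ext p
    simp only [hFd, Set.mem_setOf_eq, Finset.coe_filter, Finset.mem_product,
      Set.Finite.mem_toFinset, hB₁d, hB₂d, hB₃d, Set.mem_setOf_eq]
    tauto
  rw [hset, Set.ncard_coe_finset]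
  set S₁ := fun r => ∑ a ∈ B₁, chi r a with hS₁
  set S₂ := fun r => ∑ a ∈ B₂, chi r a with hS₂
  set S₃ := fun r => ∑ a ∈ B₃, chi r a with hS₃
  have expand : ∀ p : (Fin n → ZMod 2) × (Fin n → ZMod 2) × (Fin n → ZMod 2),
      (if p.1 + p.2.1 + p.2.2 = 0 then (2:ℝ) ^ n else 0)
        = ∑ r, chi r p.1 * chi r p.2.1 * chi r p.2.2 := by
    intro p
    rw [← sum_chi (p.1 + p.2.1 + p.2.2)]
    exact Finset.sum_congr rfl fun r _ => by rw [chi_add_right, chi_add_right]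
  have key : (2:ℝ) ^ n * F.card = ∑ r, S₁ r * S₂ r * S₃ r := by
    calc (2:ℝ) ^ n * F.card = ∑ _p ∈ F, (2:ℝ) ^ n := by
          rw [Finset.sum_const, nsmul_eq_mul, mul_comm]
      _ = ∑ p ∈ B₁ ×ˢ B₂ ×ˢ B₃, (if p.1 + p.2.1 + p.2.2 = 0 then (2:ℝ) ^ n else 0) := by
          rw [hFd, Finset.sum_filter]
      _ = ∑ p ∈ B₁ ×ˢ B₂ ×ˢ B₃, ∑ r, chi r p.1 * chi r p.2.1 * chi r p.2.2 :=
          Finset.sum_congr rfl fun p _ => expand p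
      _ = ∑ r, ∑ p ∈ B₁ ×ˢ B₂ ×ˢ B₃, chi r p.1 * chi r p.2.1 * chi r p.2.2 := Finset.sum_comm
      _ = ∑ r, S₁ r * S₂ r * S₃ r := by
          refine Finset.sum_congr rfl fun r _ => ?_
          rw [Finset.sum_product]
          have hq : ∀ a : Fin n → ZMod 2, ∑ q ∈ B₂ ×ˢ B₃, chi r a * chi r q.1 * chi r q.2
              = chi r a * (S₂ r * S₃ r) := by
            intro a
            rw [hS₂, hS₃, Finset.sum_mul_sum B₂ B₃ (fun b => chi r b) (fun c => chi r c),
              Finset.mul_sum, Finset.sum_product]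
            exact Finset.sum_congr rfl fun b _ => by
              rw [Finset.mul_sum]
              exact Finset.sum_congr rfl fun c _ => by ring
          rw [Finset.sum_congr rfl fun a _ => hq a, ← Finset.sum_mul, mul_assoc]
  -- split off r = 0
  have hsplit := Finset.sum_eq_sum_sdiff_singleton_add
    (Finset.mem_univ (0 : Fin n → ZMod 2)) (fun r => S₁ r * S₂ r * S₃ r)
  have hS0 : S₁ 0 * S₂ 0 * S₃ 0 = (α₁ * 2 ^ n) * ((α₂ * 2 ^ n) * (α₃ * 2 ^ n)) := by
    have e : ∀ (B : Finset (Fin n → ZMod 2)), (∑ a ∈ B, chi (0 : Fin n → ZMod 2) a) = B.card := by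
      intro B; simp [chi_zero_left]
    rw [hS₁, hS₂, hS₃]
    simp only [e, hc₁, hc₂, hc₃]
    ring
  set E := ∑ r ∈ Finset.univ \ {(0 : Fin n → ZMod 2)}, S₁ r * S₂ r * S₃ r with hEd
  have hcard₂ : (B₂.card : ℝ) ≤ 2 ^ n := by
    have h := Finset.card_le_univ B₂
    rw [card_V] at h
    exact_mod_cast h
  have hcard₃ : (B₃.card : ℝ) ≤ 2 ^ n := by
    have h := Finset.card_le_univ B₃
    rw [card_V] at h
    exact_mod_cast h
  have hP : (0:ℝ) < 2 ^ n := by positivity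
  have CS : (∑ r, |S₂ r| * |S₃ r|) ≤ 2 ^ n * 2 ^ n := by
    have h := Finset.sum_mul_sq_le_sq_mul_sq Finset.univ (fun r => |S₂ r|) (fun r => |S₃ r|)
    have e2 : ∑ r, |S₂ r| ^ 2 = 2 ^ n * B₂.card := by
      simp_rw [sq_abs]; exact parseval B₂
    have e3 : ∑ r, |S₃ r| ^ 2 = 2 ^ n * B₃.card := by
      simp_rw [sq_abs]; exact parseval B₃
    have hX : (0:ℝ) ≤ ∑ r, |S₂ r| * |S₃ r| :=
      Finset.sum_nonneg fun r _ => mul_nonneg (abs_nonneg _) (abs_nonneg _)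
    rw [e2, e3] at h
    have hb : (2:ℝ) ^ n * B₂.card * (2 ^ n * B₃.card) ≤ (2 ^ n * 2 ^ n) ^ 2 := by
      have n2 : (0:ℝ) ≤ (B₂.card : ℝ) := Nat.cast_nonneg _
      have n3 : (0:ℝ) ≤ (B₃.card : ℝ) := Nat.cast_nonneg _
      nlinarith [mul_le_mul hcard₂ hcard₃ n3 hP.le, hP, mul_pos hP hP]
    exact (pow_le_pow_iff_left₀ hX (by positivity) two_ne_zero).mp (h.trans hb)
  have hE : |E| ≤ ε * 2 ^ n * (2 ^ n * 2 ^ n) := by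
    calc |E| ≤ ∑ r ∈ Finset.univ \ {(0 : Fin n → ZMod 2)}, |S₁ r * S₂ r * S₃ r| :=
        Finset.abs_sum_le_sum_abs _ _
      _ ≤ ∑ r ∈ Finset.univ \ {(0 : Fin n → ZMod 2)}, (ε * 2 ^ n) * (|S₂ r| * |S₃ r|) := by
        refine Finset.sum_le_sum fun r hr => ?_
        have hr0 : r ≠ 0 := by
          rw [Finset.mem_sdiff, Finset.mem_singleton] at hr; exact hr.2
        rw [abs_mul, abs_mul, mul_assoc]
        exact mul_le_mul_of_nonneg_right (uniform_bound hu₁ r hr0)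
          (mul_nonneg (abs_nonneg _) (abs_nonneg _))
      _ = (ε * 2 ^ n) * ∑ r ∈ Finset.univ \ {(0 : Fin n → ZMod 2)}, |S₂ r| * |S₃ r| :=
        (Finset.mul_sum _ _ _).symm
      _ ≤ (ε * 2 ^ n) * ∑ r, |S₂ r| * |S₃ r| := by
        refine mul_le_mul_of_nonneg_left ?_ (by positivity)
        refine Finset.sum_le_sum_of_subset_of_nonneg (Finset.sdiff_subset) fun r _ _ =>
          mul_nonneg (abs_nonneg _) (abs_nonneg _)
      _ ≤ ε * 2 ^ n * (2 ^ n * 2 ^ n) :=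
        mul_le_mul_of_nonneg_left CS (by positivity)
  have h2n : (2:ℝ) ^ (2 * n) = 2 ^ n * 2 ^ n := by rw [two_mul, pow_add]
  rw [h2n]
  have hkey2 : (2:ℝ) ^ n * F.card = E + (α₁ * 2 ^ n) * ((α₂ * 2 ^ n) * (α₃ * 2 ^ n)) :=
    key.trans (hsplit.trans (by rw [hS0]))
  have hElb : -(ε * 2 ^ n * (2 ^ n * 2 ^ n)) ≤ E := neg_le_of_abs_le hE
  have h9 : (α₁ * α₂ * α₃ - ε) * (2 ^ n * 2 ^ n) * 2 ^ n ≤ (F.card : ℝ) * 2 ^ n := by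
    nlinarith [hkey2, hElb]
  exact le_of_mul_le_mul_right h9 hP
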